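/- Let d ≥ 3 be an integer and let u, w : ℝ^d → ℝ be nonnegative measurable functions such that the function (x,y) ↦ (|x| + |y|)·u(x)·w(y)/|x−y|^{d−1} is integrable on ℝ^d × ℝ^d. Then the symmetrization identity ∬_{ℝ^d×ℝ^d} (x·(x−y))/|x−y|^d · (u(x)w(y) + u(y)w(x)) dy dx = ∬_{ℝ^d×ℝ^d} u(x)w(y)/|x−y|^{d−2} dy dx holds, where x·(x−y) denotes the Euclidean inner product. -/

import Mathlib

open MeasureTheory

/-- For `d ≥ 3` and nonnegative measurable `u, w` such that
`(x,y) ↦ (|x|+|y|)u(x)w(y)/|x−y|^{d−1}` is integrable on `ℝ^d × ℝ^d`, one has the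
symmetrization identity
`∬ (x·(x−y))/|x−y|^d (u(x)w(y)+u(y)w(x)) dy dx = ∬ u(x)w(y)/|x−y|^{d−2} dy dx`. -/
theorem symmetrization_identity
    (d : ℕ) (hd : 3 ≤ d)
    (u w : EuclideanSpace ℝ (Fin d) → ℝ)
    (hu_meas : Measurable u) (hw_meas : Measurable w)
    (hu_nonneg : ∀ x, 0 ≤ u x) (hw_nonneg : ∀ x, 0 ≤ w x)
    (hint : Integrable (fun q : EuclideanSpace ℝ (Fin d) × EuclideanSpace ℝ (Fin d) =>
      (‖q.1‖ + ‖q.2‖) * u q.1 * w q.2 / ‖q.1 - q.2‖ ^ (d - 1))) :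
    (∫ x, ∫ y, ((inner ℝ x (x - y) : ℝ) / ‖x - y‖ ^ d) * (u x * w y + u y * w x)) =
      ∫ x, ∫ y, u x * w y / ‖x - y‖ ^ (d - 2) := by
  set H : EuclideanSpace ℝ (Fin d) × EuclideanSpace ℝ (Fin d) → ℝ :=
    fun q => (‖q.1‖ + ‖q.2‖) * u q.1 * w q.2 / ‖q.1 - q.2‖ ^ (d - 1) with hH
  set f : EuclideanSpace ℝ (Fin d) × EuclideanSpace ℝ (Fin d) → ℝ := fun q =>
    ((inner ℝ q.1 (q.1 - q.2) : ℝ) / ‖q.1 - q.2‖ ^ d) * (u q.1 * w q.2) with hf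
  set g : EuclideanSpace ℝ (Fin d) × EuclideanSpace ℝ (Fin d) → ℝ := fun q =>
    ((inner ℝ q.1 (q.1 - q.2) : ℝ) / ‖q.1 - q.2‖ ^ d) * (u q.2 * w q.1) with hg
  set h : EuclideanSpace ℝ (Fin d) × EuclideanSpace ℝ (Fin d) → ℝ :=
    fun q => u q.1 * w q.2 / ‖q.1 - q.2‖ ^ (d - 2) with hh
  -- general bound
  have key_bound : ∀ (x y : EuclideanSpace ℝ (Fin d)) (a b : ℝ), 0 ≤ a → 0 ≤ b →
      |((inner ℝ x (x - y) : ℝ) / ‖x - y‖ ^ d) * (a * b)| ≤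
        (‖x‖ + ‖y‖) * a * b / ‖x - y‖ ^ (d - 1) := by
    intro x y a b ha hb
    rcases eq_or_ne x y with rfl | hxy
    · simp only [sub_self, inner_zero_right, zero_div, zero_mul, abs_zero]
      positivity
    · have hr : (0:ℝ) < ‖x - y‖ := by
        rw [norm_pos_iff]; exact sub_ne_zero_of_ne hxy
      have hdsplit : ‖x - y‖ ^ d = ‖x - y‖ ^ (d - 1) * ‖x - y‖ := by
        rw [← pow_succ]
        congr 1
        omega
      calc |((inner ℝ x (x - y) : ℝ) / ‖x - y‖ ^ d) * (a * b)|
          = |(inner ℝ x (x - y) : ℝ)| / ‖x - y‖ ^ d * (a * b) := by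
            rw [abs_mul, abs_div, abs_of_nonneg (by positivity : (0:ℝ) ≤ ‖x - y‖ ^ d),
              abs_of_nonneg (by positivity : (0:ℝ) ≤ a * b)]
        _ ≤ (‖x‖ * ‖x - y‖) / ‖x - y‖ ^ d * (a * b) := by
            have h1 : |(inner ℝ x (x - y) : ℝ)| ≤ ‖x‖ * ‖x - y‖ := abs_real_inner_le_norm _ _
            have h2 : (0:ℝ) < ‖x - y‖ ^ d := by positivity
            gcongr
        _ = ‖x‖ * a * b / ‖x - y‖ ^ (d - 1) := by
            rw [hdsplit]
            field_simp
        _ ≤ (‖x‖ + ‖y‖) * a * b / ‖x - y‖ ^ (d - 1) := by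
            have h3 : ‖x‖ ≤ ‖x‖ + ‖y‖ := by linarith [norm_nonneg y]
            gcongr
  have hHnonneg : ∀ q, 0 ≤ H q := by
    intro q
    have := hu_nonneg q.1
    have := hw_nonneg q.2
    positivity
  -- measurability
  have hker : Measurable fun q : EuclideanSpace ℝ (Fin d) × EuclideanSpace ℝ (Fin d) =>
      (inner ℝ q.1 (q.1 - q.2) : ℝ) / ‖q.1 - q.2‖ ^ d := by
    have hc1 : Continuous fun q : EuclideanSpace ℝ (Fin d) × EuclideanSpace ℝ (Fin d) =>
        (inner ℝ q.1 (q.1 - q.2) : ℝ) :=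
      continuous_fst.inner (continuous_fst.sub continuous_snd)
    have hc2 : Continuous fun q : EuclideanSpace ℝ (Fin d) × EuclideanSpace ℝ (Fin d) =>
        ‖q.1 - q.2‖ ^ d :=
      ((continuous_fst.sub continuous_snd).norm).pow d
    exact hc1.measurable.div hc2.measurable
  have hf_meas : Measurable f := by
    apply hker.mul
    exact (hu_meas.comp measurable_fst).mul (hw_meas.comp measurable_snd)
  have hg_meas : Measurable g := by
    apply hker.mul
    exact (hu_meas.comp measurable_snd).mul (hw_meas.comp measurable_fst)
  -- integrability of f
  have hf_int : Integrable f := by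
    refine hint.mono hf_meas.aestronglyMeasurable (Filter.Eventually.of_forall fun q => ?_)
    rw [Real.norm_eq_abs, Real.norm_eq_abs, abs_of_nonneg (hHnonneg q)]
    exact key_bound q.1 q.2 (u q.1) (w q.2) (hu_nonneg _) (hw_nonneg _)
  -- integrability of g via swap
  have hHswap_int : Integrable (H ∘ Prod.swap)
      (volume : Measure (EuclideanSpace ℝ (Fin d) × EuclideanSpace ℝ (Fin d))) := by
    rw [MeasureTheory.Measure.volume_eq_prod] at hint ⊢
    exact hint.swap
  have hg_int : Integrable g := by
    refine hHswap_int.mono hg_meas.aestronglyMeasurable (Filter.Eventually.of_forall fun q => ?_)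
    have heq : (H ∘ Prod.swap) q = (‖q.2‖ + ‖q.1‖) * u q.2 * w q.1 / ‖q.2 - q.1‖ ^ (d - 1) := rfl
    have hnn : (0:ℝ) ≤ (‖q.2‖ + ‖q.1‖) * u q.2 * w q.1 / ‖q.2 - q.1‖ ^ (d - 1) := by
      have := hu_nonneg q.2
      have := hw_nonneg q.1
      positivity
    rw [Real.norm_eq_abs, Real.norm_eq_abs, heq, abs_of_nonneg hnn]
    have hb := key_bound q.1 q.2 (u q.2) (w q.1) (hu_nonneg _) (hw_nonneg _)
    calc |g q| ≤ (‖q.1‖ + ‖q.2‖) * u q.2 * w q.1 / ‖q.1 - q.2‖ ^ (d - 1) := hb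
      _ = (‖q.2‖ + ‖q.1‖) * u q.2 * w q.1 / ‖q.2 - q.1‖ ^ (d - 1) := by
          rw [norm_sub_rev, add_comm ‖q.1‖]
  -- pointwise identity : h = f + g ∘ swap
  have hpt : ∀ q : EuclideanSpace ℝ (Fin d) × EuclideanSpace ℝ (Fin d),
      h q = f q + g q.swap := by
    rintro ⟨x, y⟩
    simp only [hf, hg, hh, Prod.swap_prod_mk]
    rcases eq_or_ne x y with rfl | hxy
    · have h1 : x - x = (0 : EuclideanSpace ℝ (Fin d)) := sub_self x
      simp [h1, zero_pow (by omega : d - 2 ≠ 0), zero_pow (by omega : d ≠ 0)]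
    · have hr : (0:ℝ) < ‖x - y‖ := by
        rw [norm_pos_iff]; exact sub_ne_zero_of_ne hxy
      have hsum : (inner ℝ x (x - y) : ℝ) + (inner ℝ y (y - x) : ℝ) = ‖x - y‖ ^ 2 := by
        have hneg : (inner ℝ y (y - x) : ℝ) = -(inner ℝ y (x - y) : ℝ) := by
          rw [← inner_neg_right]; congr 1; abel
        rw [hneg, ← sub_eq_add_neg, ← inner_sub_left, real_inner_self_eq_norm_sq]
      have hyx : ‖y - x‖ = ‖x - y‖ := norm_sub_rev y x
      have hdsplit : ‖x - y‖ ^ d = ‖x - y‖ ^ (d - 2) * ‖x - y‖ ^ 2 := by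
        rw [← pow_add]; congr 1; omega
      rw [hyx]
      rw [div_mul_eq_mul_div, div_mul_eq_mul_div, ← add_div, ← add_mul, hsum, hdsplit]
      have hkey : ‖x - y‖ ^ 2 * (u x * w y) / (‖x - y‖ ^ (d - 2) * ‖x - y‖ ^ 2)
          = u x * w y / ‖x - y‖ ^ (d - 2) := by
        rw [mul_comm (‖x - y‖ ^ (d - 2)) (‖x - y‖ ^ 2)]
        exact mul_div_mul_left _ _ (by positivity)
      exact hkey.symm
  have hgswap_int : Integrable (fun q : EuclideanSpace ℝ (Fin d) × EuclideanSpace ℝ (Fin d) =>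
      g q.swap) := by
    rw [MeasureTheory.Measure.volume_eq_prod] at hg_int ⊢
    exact hg_int.swap
  have hh_int : Integrable h := by
    have heq : h = fun q => f q + g q.swap := funext hpt
    rw [heq]
    exact hf_int.add hgswap_int
  have hfg_int : Integrable (f + g) := hf_int.add hg_int
  -- rewrite iterated integrals as product integrals
  have hLHS : (∫ x, ∫ y, ((inner ℝ x (x - y) : ℝ) / ‖x - y‖ ^ d) * (u x * w y + u y * w x))
      = ∫ q : EuclideanSpace ℝ (Fin d) × EuclideanSpace ℝ (Fin d), (f + g) q := by
    rw [MeasureTheory.Measure.volume_eq_prod] at hfg_int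
    rw [show (∫ q : EuclideanSpace ℝ (Fin d) × EuclideanSpace ℝ (Fin d), (f + g) q) =
        ∫ q, (f + g) q ∂(volume.prod volume) from by
          rw [← MeasureTheory.Measure.volume_eq_prod]]
    rw [integral_prod _ hfg_int]
    congr 1
    ext x
    congr 1
    ext y
    simp only [Pi.add_apply, hf, hg]
    ring
  have hRHS : (∫ x, ∫ y, u x * w y / ‖x - y‖ ^ (d - 2))
      = ∫ q : EuclideanSpace ℝ (Fin d) × EuclideanSpace ℝ (Fin d), h q := by
    rw [MeasureTheory.Measure.volume_eq_prod] at hh_int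
    rw [show (∫ q : EuclideanSpace ℝ (Fin d) × EuclideanSpace ℝ (Fin d), h q) =
        ∫ q, h q ∂(volume.prod volume) from by
          rw [← MeasureTheory.Measure.volume_eq_prod]]
    rw [integral_prod _ hh_int]
  rw [hLHS, hRHS]
  have hswap_eq : (∫ q : EuclideanSpace ℝ (Fin d) × EuclideanSpace ℝ (Fin d), g q.swap)
      = ∫ q : EuclideanSpace ℝ (Fin d) × EuclideanSpace ℝ (Fin d), g q := by
    rw [MeasureTheory.Measure.volume_eq_prod]
    exact integral_prod_swap g
  calc (∫ q : EuclideanSpace ℝ (Fin d) × EuclideanSpace ℝ (Fin d), (f + g) q)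
      = (∫ q, f q) + ∫ q : EuclideanSpace ℝ (Fin d) × EuclideanSpace ℝ (Fin d), g q := by
        simp only [Pi.add_apply]
        exact integral_add hf_int hg_int
    _ = (∫ q, f q) + ∫ q : EuclideanSpace ℝ (Fin d) × EuclideanSpace ℝ (Fin d), g q.swap := by
        rw [hswap_eq]
    _ = ∫ q : EuclideanSpace ℝ (Fin d) × EuclideanSpace ℝ (Fin d), (f q + g q.swap) :=
        (integral_add hf_int hgswap_int).symm
    _ = ∫ q : EuclideanSpace ℝ (Fin d) × EuclideanSpace ℝ (Fin d), h q := by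
        congr 1
        ext q
        rw [hpt q]
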